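/- The number of dominations d used to construct a k-threshold hypergraph is determined by its degree sequence: if D_s denotes the width of the s-th block from the top of the Ferrer's diagram of the degree sequence (i.e., the s-th largest distinct degree), then d = min{s ∈ ℕ : D_s < s} − 1; that is, D_d ≥ d and D_{d+1} < d + 1. -/

import Mathlib

open Finset

/-- The hypergraph Laplacian as an operator on real-valued vertex functions:
`(L_G f)(v) = ∑_{e ∋ v} (1/(|e|-1)) ∑_{u ∈ e} (f v - f u)`. -/
noncomputable def lapOp {V : Type} [Fintype V] [DecidableEq V] (E : Finset (Finset V)) (f : V → ℝ) : V → ℝ :=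
  fun v => ∑ e ∈ E.filter (fun e => v ∈ e), (1 / ((e.card : ℝ) - 1)) * ∑ u ∈ e, (f v - f u)

/-- The matrix of the hypergraph Laplacian. -/
noncomputable def lapMatrix {V : Type} [Fintype V] [DecidableEq V] (E : Finset (Finset V)) : Matrix V V ℝ :=
  Matrix.of fun v w => ∑ e ∈ E.filter (fun e => v ∈ e),
    (1 / ((e.card : ℝ) - 1)) * ((if w = v then (e.card : ℝ) else 0) - (if w ∈ e then 1 else 0))

/-- Edge set obtained from `E` by adding a `k`-dominating set `S = Fin k` of fresh vertices:
the new edges are `S ∪ {u}` for every old vertex `u`. -/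
def domEdges {V : Type} [Fintype V] [DecidableEq V] (E : Finset (Finset V)) (k : ℕ) :
    Finset (Finset (V ⊕ Fin k)) :=
  E.image (Finset.image Sum.inl) ∪
    (Finset.univ : Finset V).image
      (fun u => insert (Sum.inl u) ((Finset.univ : Finset (Fin k)).image Sum.inr))

/-- Vertex type of the threshold hypergraph with string `0^{m 0} (k 0) 0^{m 1} (k 1) ⋯`:
`inl ⟨i, a⟩` is the `a`-th isolated vertex added before the `i`-th domination, and
`inr ⟨i, b⟩` is the `b`-th vertex of the `i`-th dominating set. -/
abbrev TV (d : ℕ) (m k : Fin d → ℕ) : Type :=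
  (Σ i : Fin d, Fin (m i)) ⊕ (Σ i : Fin d, Fin (k i))

/-- Vertices present just before the `i`-th domination is applied. -/
def before (d : ℕ) (m k : Fin d → ℕ) (i : Fin d) : Finset (TV d m k) :=
  (((Finset.univ.filter (fun j : Fin d => j ≤ i)).sigma
      fun j => (Finset.univ : Finset (Fin (m j)))).image Sum.inl) ∪
  (((Finset.univ.filter (fun j : Fin d => j < i)).sigma
      fun j => (Finset.univ : Finset (Fin (k j)))).image Sum.inr)

/-- The `i`-th dominating set. -/
def domSet (d : ℕ) (m k : Fin d → ℕ) (i : Fin d) : Finset (TV d m k) :=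
  (Finset.univ : Finset (Fin (k i))).image fun b => Sum.inr ⟨i, b⟩

/-- The edge set of the threshold hypergraph `0^{m 0} (k 0) 0^{m 1} (k 1) ⋯ 0^{m (d-1)} (k (d-1))`:
the `i`-th domination adds the edges `S_i ∪ {u}` for all previously present vertices `u`. -/
def thrEdges (d : ℕ) (m k : Fin d → ℕ) : Finset (Finset (TV d m k)) :=
  Finset.univ.biUnion fun i : Fin d =>
    (before d m k i).image fun u => insert u (domSet d m k i)


section HG
variable {d : ℕ} {m k' : Fin d → ℕ}

lemma mem_before_inl {i t : Fin d} {a : Fin (m t)} :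
    (Sum.inl ⟨t, a⟩ : TV d m k') ∈ before d m k' i ↔ t ≤ i := by
  simp [before, Finset.mem_sigma, Sigma.ext_iff]

lemma mem_before_inr {i t : Fin d} {c : Fin (k' t)} :
    (Sum.inr ⟨t, c⟩ : TV d m k') ∈ before d m k' i ↔ t < i := by
  simp [before, Finset.mem_sigma, Sigma.ext_iff]

lemma mem_domSet {i : Fin d} {x : TV d m k'} :
    x ∈ domSet d m k' i ↔ ∃ b : Fin (k' i), x = Sum.inr ⟨i, b⟩ := by
  simp [domSet, eq_comm]

lemma inr_mem_edge_le {i : Fin d} {u : TV d m k'} (hu : u ∈ before d m k' i)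
    {t : Fin d} {c : Fin (k' t)} (h : (Sum.inr ⟨t, c⟩ : TV d m k') ∈ insert u (domSet d m k' i)) :
    t ≤ i := by
  rcases Finset.mem_insert.1 h with h | h
  · subst h; exact le_of_lt (mem_before_inr.1 hu)
  · obtain ⟨b, hb⟩ := mem_domSet.1 h
    obtain ⟨ht, -⟩ := Sigma.mk.inj_iff.1 (Sum.inr.inj hb)
    exact le_of_eq ht

lemma not_mem_domSet_of_mem_before {i : Fin d} {u : TV d m k'} (hu : u ∈ before d m k' i) :
    u ∉ domSet d m k' i := by
  intro h
  obtain ⟨b, rfl⟩ := mem_domSet.1 h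
  exact absurd (mem_before_inr.1 hu) (lt_irrefl _)

lemma edge_inj (hk' : ∀ i, 0 < k' i) {i i' : Fin d} {u u' : TV d m k'}
    (hu : u ∈ before d m k' i) (hu' : u' ∈ before d m k' i')
    (h : insert u (domSet d m k' i) = insert u' (domSet d m k' i')) : i = i' ∧ u = u' := by
  have hmem : (Sum.inr ⟨i, ⟨0, hk' i⟩⟩ : TV d m k') ∈ insert u (domSet d m k' i) :=
    Finset.mem_insert_of_mem (mem_domSet.2 ⟨⟨0, hk' i⟩, rfl⟩)
  have hmem' : (Sum.inr ⟨i', ⟨0, hk' i'⟩⟩ : TV d m k') ∈ insert u' (domSet d m k' i') :=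
    Finset.mem_insert_of_mem (mem_domSet.2 ⟨⟨0, hk' i'⟩, rfl⟩)
  have h1 : i ≤ i' := inr_mem_edge_le hu' (h ▸ hmem)
  have h2 : i' ≤ i := inr_mem_edge_le hu (h ▸ hmem')
  have hii : i = i' := le_antisymm h1 h2
  subst hii
  refine ⟨rfl, ?_⟩
  have hu1 : u ∈ insert u' (domSet d m k' i) := h ▸ Finset.mem_insert_self u _
  have hu2 : u' ∈ insert u (domSet d m k' i) := h ▸ Finset.mem_insert_self u' _
  rcases Finset.mem_insert.1 hu1 with h | h
  · exact h
  · exact absurd h (not_mem_domSet_of_mem_before hu)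

lemma deg_eq (hk' : ∀ i, 0 < k' i) (v : TV d m k') :
    ((thrEdges d m k').filter (fun e => v ∈ e)).card
      = ∑ i : Fin d, ((before d m k' i).filter (fun u => v ∈ insert u (domSet d m k' i))).card := by
  unfold thrEdges
  rw [Finset.filter_biUnion]
  rw [Finset.card_biUnion]
  · refine Finset.sum_congr rfl fun i _ => ?_
    rw [Finset.filter_image]
    exact Finset.card_image_of_injOn fun u hu u' hu' h =>
      (edge_inj hk' (Finset.mem_filter.1 hu).1 (Finset.mem_filter.1 hu').1 h).2
  · intro i _ i' _ hne
    simp only [Finset.disjoint_left]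
    intro e he he'
    rw [Finset.mem_filter, Finset.mem_image] at he he'
    obtain ⟨⟨u, hu, rfl⟩, -⟩ := he
    obtain ⟨⟨u', hu', heq⟩, -⟩ := he'
    exact hne ((edge_inj hk' hu' hu heq).1).symm


lemma card_before_const {k : ℕ} (i : Fin d) :
    (before d m (fun _ => k) i).card
      = (∑ l ∈ Finset.univ.filter (fun l : Fin d => l ≤ i), m l) + k * i.val := by
  unfold before
  rw [Finset.card_union_of_disjoint]
  · rw [Finset.card_image_of_injective _ Sum.inl_injective,
      Finset.card_image_of_injective _ Sum.inr_injective,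
      Finset.card_sigma, Finset.card_sigma]
    simp only [Finset.card_univ, Fintype.card_fin]
    congr 1
    rw [Finset.sum_const, smul_eq_mul, mul_comm]
    congr 1
    have : Finset.univ.filter (fun l : Fin d => l < i) = Finset.Iio i := by
      ext x; simp
    rw [this, Fin.card_Iio]
  · simp only [Finset.disjoint_left, Finset.mem_image]
    rintro x ⟨a, ha, rfl⟩ ⟨b, hb, hab⟩
    exact Sum.inl_ne_inr hab.symm

lemma card_Ioi_fin (j : Fin d) :
    (Finset.univ.filter (fun i : Fin d => j < i)).card = d - 1 - j.val := by
  have : Finset.univ.filter (fun i : Fin d => j < i) = Finset.Ioi j := by ext x; simp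
  rw [this, Fin.card_Ioi]

lemma deg_inr_eq {k : ℕ} (hk : 0 < k) (j : Fin d) (b : Fin k) :
    ((thrEdges d m (fun _ => k)).filter
        (fun e => (Sum.inr ⟨j, b⟩ : TV d m (fun _ => k)) ∈ e)).card
      = (∑ l ∈ Finset.univ.filter (fun l : Fin d => l ≤ j), m l) + k * j.val
        + (d - 1 - j.val) := by
  rw [deg_eq (fun _ => hk)]
  have hsum : ∀ i : Fin d,
      ((before d m (fun _ => k) i).filter
        (fun u => (Sum.inr ⟨j, b⟩ : TV d m (fun _ => k)) ∈ insert u (domSet d m (fun _ => k) i))).card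
      = if i = j then (before d m (fun _ => k) i).card else (if j < i then 1 else 0) := by
    intro i
    by_cases hij : i = j
    · subst hij
      rw [if_pos rfl, Finset.filter_true_of_mem]
      intro u hu
      exact Finset.mem_insert_of_mem (mem_domSet.2 ⟨b, rfl⟩)
    · rw [if_neg hij]
      have hcond : ∀ u ∈ before d m (fun _ => k) i,
          ((Sum.inr ⟨j, b⟩ : TV d m (fun _ => k)) ∈ insert u (domSet d m (fun _ => k) i)
            ↔ u = Sum.inr ⟨j, b⟩) := by
        intro u hu
        rw [Finset.mem_insert]
        constructor
        · rintro (h | h)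
          · exact h.symm
          · obtain ⟨c, hc⟩ := mem_domSet.1 h
            obtain ⟨ht, -⟩ := Sigma.mk.inj_iff.1 (Sum.inr.inj hc)
            exact absurd ht.symm hij
        · rintro rfl; exact Or.inl rfl
      rw [Finset.filter_congr hcond, Finset.filter_eq']
      by_cases hmem : (Sum.inr ⟨j, b⟩ : TV d m (fun _ => k)) ∈ before d m (fun _ => k) i
      · rw [if_pos hmem, if_pos (mem_before_inr.1 hmem), Finset.card_singleton]
      · rw [if_neg hmem, if_neg (fun h => hmem (mem_before_inr.2 h)), Finset.card_empty]
  rw [Finset.sum_congr rfl (fun i _ => hsum i)]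
  rw [← Finset.add_sum_erase Finset.univ _ (Finset.mem_univ j)]
  rw [if_pos rfl, card_before_const]
  have hrest : ∑ i ∈ Finset.univ.erase j,
      (if i = j then (before d m (fun _ => k) i).card else if j < i then 1 else 0)
      = d - 1 - j.val := by
    rw [Finset.sum_congr rfl (fun i hi => if_neg (Finset.mem_erase.1 hi).1)]
    rw [Finset.sum_boole]
    have : (Finset.univ.erase j).filter (fun i => j < i)
        = Finset.univ.filter (fun i : Fin d => j < i) := by
      ext x
      simp only [Finset.mem_filter, Finset.mem_erase, Finset.mem_univ, true_and, and_true]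
      exact ⟨fun h => h.2, fun h => ⟨ne_of_gt h, h⟩⟩
    rw [this, card_Ioi_fin, Nat.cast_id]
  rw [hrest]

lemma deg_inl_le {k : ℕ} (hk : 0 < k) (j : Fin d) (a : Fin (m j)) :
    ((thrEdges d m (fun _ => k)).filter
        (fun e => (Sum.inl ⟨j, a⟩ : TV d m (fun _ => k)) ∈ e)).card ≤ d := by
  rw [deg_eq (fun _ => hk)]
  calc ∑ i : Fin d, ((before d m (fun _ => k) i).filter
        (fun u => (Sum.inl ⟨j, a⟩ : TV d m (fun _ => k)) ∈ insert u (domSet d m (fun _ => k) i))).card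
      ≤ ∑ _i : Fin d, 1 := by
        refine Finset.sum_le_sum fun i _ => ?_
        refine Finset.card_le_one.2 fun u hu u' hu' => ?_
        obtain ⟨-, h⟩ := Finset.mem_filter.1 hu
        obtain ⟨-, h'⟩ := Finset.mem_filter.1 hu'
        have e1 : u = Sum.inl ⟨j, a⟩ := by
          rcases Finset.mem_insert.1 h with h | h
          · exact h.symm
          · obtain ⟨c, hc⟩ := mem_domSet.1 h
            exact absurd hc (by simp)
        have e2 : u' = Sum.inl ⟨j, a⟩ := by
          rcases Finset.mem_insert.1 h' with h | h
          · exact h.symm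
          · obtain ⟨c, hc⟩ := mem_domSet.1 h
            exact absurd hc (by simp)
        rw [e1, e2]
    _ = d := by simp



lemma countP_sort_eq (V : Finset ℕ) (p : ℕ → Prop) [DecidablePred p] :
    (V.sort (· ≤ ·)).countP (fun x => decide (p x)) = (V.filter p).card := by
  rw [(Finset.sort_perm_toList V (· ≤ ·)).countP_eq]
  have h1 : V.toList.countP (fun x => decide (p x)) = Multiset.countP p V.val := by
    rw [← Multiset.coe_countP, Finset.coe_toList]
  rw [h1, Multiset.countP_eq_card_filter]
  rfl

lemma sorted_le_getElem (l : List ℕ) (hl : l.Pairwise (· ≤ ·)) (i j : ℕ) (hij : i ≤ j)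
    (hj : j < l.length) : l[i]'(lt_of_le_of_lt hij hj) ≤ l[j]'hj := by
  have := hl.rel_get_of_le (a := ⟨i, lt_of_le_of_lt hij hj⟩) (b := ⟨j, hj⟩) hij
  simpa using this

lemma getD_revsort_ge (V : Finset ℕ) (c i : ℕ)
    (h : i < (V.filter (fun x => c ≤ x)).card) :
    c ≤ ((V.sort (· ≤ ·)).reverse).getD i 0 := by
  set l := V.sort (· ≤ ·) with hl
  have hsort : l.Pairwise (· ≤ ·) := Finset.pairwise_sort _ _
  have hcount : l.countP (fun x => decide (c ≤ x)) = (V.filter (fun x => c ≤ x)).card :=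
    countP_sort_eq V _
  have hcl : i < l.countP (fun x => decide (c ≤ x)) := hcount ▸ h
  have hin : i < l.length := lt_of_lt_of_le hcl List.countP_le_length
  have hin' : i < l.reverse.length := by simpa using hin
  rw [List.getD_eq_getElem _ _ hin', List.getElem_reverse]
  set j := l.length - 1 - i with hj
  by_contra hc
  push_neg at hc
  have hja : j < l.length := by omega
  have h0 : (l.take (j+1)).countP (fun x => decide (c ≤ x)) = 0 := by
    rw [List.countP_eq_zero]
    intro x hx
    obtain ⟨idx, hidx, rfl⟩ := List.mem_take_iff_getElem.1 hx
    have hidx' : idx < l.length := by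
      have := hidx; simp at this; omega
    have : l[idx]'hidx' ≤ l[j]'hja := by
      have : idx ≤ j := by have := hidx; simp at this; omega
      simpa using hsort.rel_get_of_le (a := ⟨idx, hidx'⟩) (b := ⟨j, hja⟩) this
    simp only [decide_eq_true_eq]
    exact fun hcx => absurd (le_trans hcx this) (not_le.2 hc)
  have hsplit : l.countP (fun x => decide (c ≤ x)) =
      (l.take (j+1)).countP (fun x => decide (c ≤ x)) +
      (l.drop (j+1)).countP (fun x => decide (c ≤ x)) := by
    conv_lhs => rw [← List.take_append_drop (j+1) l]
    rw [List.countP_append]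
  have hdroplen : (l.drop (j+1)).length = l.length - (j+1) := by simp
  have : l.countP (fun x => decide (c ≤ x)) ≤ l.length - (j+1) := by
    rw [hsplit, h0]
    simpa [hdroplen] using List.countP_le_length (l := l.drop (j+1)) (p := fun x => decide (c ≤ x))
  omega

lemma getD_revsort_le (V : Finset ℕ) (c i : ℕ)
    (h : (V.filter (fun x => c < x)).card ≤ i) :
    ((V.sort (· ≤ ·)).reverse).getD i 0 ≤ c := by
  set l := V.sort (· ≤ ·) with hl
  have hsort : l.Pairwise (· ≤ ·) := Finset.pairwise_sort _ _
  have hcount : l.countP (fun x => decide (c < x)) = (V.filter (fun x => c < x)).card :=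
    countP_sort_eq V _
  by_cases hin : i < l.reverse.length
  · rw [List.getD_eq_getElem _ _ hin, List.getElem_reverse]
    have hin2 : i < l.length := by simpa using hin
    set j := l.length - 1 - i with hj
    have hja : j < l.length := by omega
    by_contra hc
    push_neg at hc
    have hall : ∀ x ∈ l.drop j, c < x := by
      intro x hx
      obtain ⟨idx, hidx, rfl⟩ := List.mem_drop_iff_getElem.1 hx
      have hji : j ≤ j + idx := Nat.le_add_right _ _
      have hlt : j + idx < l.length := by omega
      calc c < l[j]'hja := hc
        _ ≤ l[j+idx]'hlt := by
          simpa using hsort.rel_get_of_le (a := ⟨j, hja⟩) (b := ⟨j+idx, hlt⟩) hji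
    have hdrop : (l.drop j).countP (fun x => decide (c < x)) = (l.drop j).length :=
      List.countP_eq_length.2 (by intro a ha; simpa using hall a ha)
    have hsplit : l.countP (fun x => decide (c < x)) =
        (l.take j).countP (fun x => decide (c < x)) +
        (l.drop j).countP (fun x => decide (c < x)) := by
      conv_lhs => rw [← List.take_append_drop j l]
      rw [List.countP_append]
    have hdl : (l.drop j).length = l.length - j := by simp
    omega
  · rw [List.getD_eq_default _ _ (not_lt.1 hin)]
    exact Nat.zero_le _

end HG


theorem stmt_18 (d : ℕ) (hd : 0 < d) (m : Fin d → ℕ) (k : ℕ)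
    (hm : 1 ≤ m ⟨0, hd⟩) (hk : 1 ≤ k) (hmk : ∀ i : Fin d, 2 ≤ m i + k) :
    let deg : TV d m (fun _ => k) → ℕ :=
      fun v => ((thrEdges d m fun _ => k).filter (fun e => v ∈ e)).card
    let D : ℕ → ℕ :=
      fun i => (((Finset.univ.image deg).sort (· ≤ ·)).reverse).getD (i - 1) 0
    ∀ hex : ∃ s, D s < s,
      Nat.find hex = d + 1 ∧ d ≤ D d ∧ D (d + 1) < d + 1 := by
  intro deg D hex
  have hk0 : 0 < k := hk
  set S : Fin d → ℕ := fun j => ∑ l ∈ Finset.univ.filter (fun l : Fin d => l ≤ j), m l with hS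
  set F : Fin d → ℕ := fun j => S j + k * j.val + (d - 1 - j.val) with hF
  have hdeg_inr : ∀ (j : Fin d) (b : Fin k), deg (Sum.inr ⟨j, b⟩) = F j := by
    intro j b
    exact deg_inr_eq hk0 j b
  have hdeg_inl : ∀ (j : Fin d) (a : Fin (m j)), deg (Sum.inl ⟨j, a⟩) ≤ d := by
    intro j a
    exact deg_inl_le hk0 j a
  have hSle : ∀ {j j' : Fin d}, j < j' → S j + m j' ≤ S j' := by
    intro j j' hjj
    have hsub : insert j' (Finset.univ.filter (fun l : Fin d => l ≤ j))
        ⊆ Finset.univ.filter (fun l : Fin d => l ≤ j') := by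
      intro x hx
      rcases Finset.mem_insert.1 hx with rfl | hx
      · simp
      · simp only [Finset.mem_filter, Finset.mem_univ, true_and] at hx ⊢
        exact le_trans hx (le_of_lt hjj)
    have hnot : j' ∉ Finset.univ.filter (fun l : Fin d => l ≤ j) := by
      simp only [Finset.mem_filter, Finset.mem_univ, true_and]
      exact not_le.2 hjj
    calc S j + m j' = ∑ l ∈ insert j' (Finset.univ.filter (fun l : Fin d => l ≤ j)), m l := by
          rw [Finset.sum_insert hnot]; ring
      _ ≤ S j' := Finset.sum_le_sum_of_subset hsub
  have hFmono : ∀ {j j' : Fin d}, j < j' → F j < F j' := by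
    intro j j' hjj
    have h1 : S j + m j' ≤ S j' := hSle hjj
    have hvlt : j.val < j'.val := hjj
    have hke : k + (j'.val - j.val - 1) ≤ k * (j'.val - j.val) := by
      obtain ⟨e', hE⟩ : ∃ e', j'.val - j.val = e' + 1 := ⟨j'.val - j.val - 1, by omega⟩
      rw [hE, Nat.mul_add, Nat.mul_one]
      have := Nat.le_mul_of_pos_left e' hk0
      omega
    have hmul : k * j'.val = k * j.val + k * (j'.val - j.val) := by
      rw [← Nat.mul_add]
      congr 1
      omega
    have hmj : 2 ≤ m j' + k := hmk j'
    have hjd : j'.val < d := j'.isLt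
    simp only [hF]
    omega
  have hFinj : Function.Injective F := by
    intro j j' h
    rcases lt_trichotomy j j' with hlt | heq | hlt
    · exact absurd h (ne_of_lt (hFmono hlt))
    · exact heq
    · exact absurd h.symm (ne_of_lt (hFmono hlt))
  have hFd : ∀ j : Fin d, d ≤ F j := by
    intro j
    have h0 : m ⟨0, hd⟩ ≤ S j := by
      refine Finset.single_le_sum (fun l _ => Nat.zero_le _) ?_
      simp only [Finset.mem_filter, Finset.mem_univ, true_and]
      exact Fin.mk_le_of_le_val (Nat.zero_le _)
    have hkj : j.val ≤ k * j.val := Nat.le_mul_of_pos_left j.val hk0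
    have hjd : j.val < d := j.isLt
    simp only [hF]
    omega
  set V : Finset ℕ := Finset.univ.image deg with hV
  set T : Finset ℕ := Finset.univ.image F with hT
  have hTcard : T.card = d := by
    rw [hT, Finset.card_image_of_injective _ hFinj]
    simp
  have hTsub : T ⊆ V.filter (fun x => d ≤ x) := by
    intro x hx
    obtain ⟨j, -, rfl⟩ := Finset.mem_image.1 hx
    refine Finset.mem_filter.2 ⟨?_, hFd j⟩
    refine Finset.mem_image.2 ⟨Sum.inr ⟨j, ⟨0, hk0⟩⟩, Finset.mem_univ _, hdeg_inr j _⟩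
  have hcount_ge : d ≤ (V.filter (fun x => d ≤ x)).card := by
    calc d = T.card := hTcard.symm
      _ ≤ _ := Finset.card_le_card hTsub
  have hVT : V.filter (fun x => d < x) ⊆ T := by
    intro x hx
    obtain ⟨hxV, hxd⟩ := Finset.mem_filter.1 hx
    obtain ⟨v, -, rfl⟩ := Finset.mem_image.1 hxV
    rcases v with ⟨j, a⟩ | ⟨j, b⟩
    · exact absurd hxd (not_lt.2 (hdeg_inl j a))
    · rw [hdeg_inr j b]
      exact Finset.mem_image.2 ⟨j, Finset.mem_univ _, rfl⟩
  have hcount_le : (V.filter (fun x => d < x)).card ≤ d :=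
    le_trans (Finset.card_le_card hVT) (le_of_eq hTcard)
  have hDge : ∀ s : ℕ, s ≤ d → s ≤ D s := by
    intro s hs
    rcases Nat.eq_zero_or_pos s with rfl | hs1
    · exact Nat.zero_le _
    have hidx : s - 1 < (V.filter (fun x => d ≤ x)).card := by omega
    have := getD_revsort_ge V d (s - 1) hidx
    exact le_trans hs this
  have hDlt : D (d + 1) < d + 1 := by
    have hle : D (d + 1) ≤ d := by
      show ((V.sort (· ≤ ·)).reverse).getD (d + 1 - 1) 0 ≤ d
      rw [Nat.add_sub_cancel]
      exact getD_revsort_le V d d hcount_le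
    omega
  refine ⟨?_, hDge d le_rfl, hDlt⟩
  rw [Nat.find_eq_iff]
  exact ⟨hDlt, fun s hsd => not_lt.2 (hDge s (by omega))⟩
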